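/- For every integer k ≥ 2, the map φ^{(k)} is a bijection from the set of words rearranging a fixed finite multiset M of positive integers to itself, with inverse given by ψ^{(k)}(w) = γ_1^{(k)} ∘ ⋯ ∘ γ_{n−1}^{(k)} ∘ γ_n^{(k)}(w). -/

import Mathlib

open scoped Classical

/-- `x` splits the pair `a`, `b` if `a ≤ x < b` or `b ≤ x < a`. -/
def Splits (x a b : ℕ) : Prop := (a ≤ x ∧ x < b) ∨ (b ≤ x ∧ x < a)

/-- `m ∈ Γ_j^{(k)}(w)`, where the word `w` is accessed with 1-based indices:
`j - k ∈ Γ_j^{(k)}(w)` when `w j` splits the pair `w (j-k), w (j-k+1)`, and for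
`i ∈ Γ_j^{(k)}(w)`, also `i - k ∈ Γ_j^{(k)}(w)` when exactly one of `w i`, `w (i+1)`
splits the pair `w (i-k), w (i-k+1)`. -/
def MemGamma (k : ℕ) (w : ℕ → ℕ) (j m : ℕ) : Prop :=
  1 ≤ m ∧ ∃ t : ℕ, m + (t + 1) * k = j ∧
    Splits (w j) (w (j - k)) (w (j - k + 1)) ∧
    ∀ s, 1 ≤ s → s ≤ t →
      Xor' (Splits (w (m + s * k)) (w (m + (s - 1) * k)) (w (m + (s - 1) * k + 1)))
           (Splits (w (m + s * k + 1)) (w (m + (s - 1) * k)) (w (m + (s - 1) * k + 1)))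

/-- The map `γ_j^{(k)}`: interchange `w i` and `w (i+1)` for every `i ∈ Γ_j^{(k)}(w)`. -/
noncomputable def gamW (k j : ℕ) (w : ℕ → ℕ) : ℕ → ℕ := fun p =>
  if MemGamma k w j p then w (p + 1)
  else if MemGamma k w j (p - 1) then w (p - 1)
  else w p

noncomputable def phiAux (k : ℕ) (w : ℕ → ℕ) : ℕ → ℕ → ℕ
  | 0 => w
  | j + 1 => gamW k (j + 1) (phiAux k w j)

/-- `φ^{(k)} = γ_n^{(k)} ∘ γ_{n-1}^{(k)} ∘ ⋯ ∘ γ_1^{(k)}` on words of length `n`. -/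
noncomputable def phiW (k n : ℕ) (w : ℕ → ℕ) : ℕ → ℕ := phiAux k w n

/-- 1-based access to the letters of a list word. -/
def wf (l : List ℕ) (i : ℕ) : ℕ := l.getD (i - 1) 0

/-- `φ^{(k)}` as an operation on list words. -/
noncomputable def phiL (k : ℕ) (l : List ℕ) : List ℕ :=
  List.ofFn (fun i : Fin l.length => phiW k l.length (wf l) (i.1 + 1))

/-- The `k`-descent set `Des_k(w) = {(i, i+k) : w i > w (i+k)}` of a word of length `n`,
recorded by its set of first components. -/
def DesKF (k n : ℕ) (w : ℕ → ℕ) : Finset ℕ :=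
  (Finset.Icc 1 n).filter fun i => i + k ≤ n ∧ w (i + k) < w i

/-- The `k`-inversion set `Inv_k(w) = {(i, j) : 0 < j - i < k and w i > w j}`. -/
def InvKF (k n : ℕ) (w : ℕ → ℕ) : Finset (ℕ × ℕ) :=
  ((Finset.Icc 1 n) ×ˢ (Finset.Icc 1 n)).filter fun p =>
    p.1 < p.2 ∧ p.2 - p.1 < k ∧ w p.2 < w p.1

/-- The `k`-major index `maj_k(w) = |Inv_k(w)| + Σ_{(i,i+k) ∈ Des_k(w)} i`. -/
def majKF (k n : ℕ) (w : ℕ → ℕ) : ℕ := (InvKF k n w).card + ∑ i ∈ DesKF k n w, i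

/-- The `k`-major index of a list word. -/
def majKL (k : ℕ) (l : List ℕ) : ℕ := majKF k l.length (wf l)

/-- The ordinary major index of a list word: the sum of the indices `i` with
`w i > w (i+1)`. -/
def majL (l : List ℕ) : ℕ :=
  ∑ i ∈ (Finset.Icc 1 l.length).filter (fun i => i + 1 ≤ l.length ∧ wf l (i + 1) < wf l i), i

/-- The ordinary inversion number of a list word: the number of pairs `i < j` with
`w i > w j`. -/
def invL (l : List ℕ) : ℕ :=
  (((Finset.Icc 1 l.length) ×ˢ (Finset.Icc 1 l.length)).filter fun p =>
    p.1 < p.2 ∧ wf l p.2 < wf l p.1).card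

noncomputable def psiAux (k n : ℕ) (w : ℕ → ℕ) : ℕ → ℕ → ℕ
  | 0 => w
  | j + 1 => gamW k (n - j) (psiAux k n w j)

/-- `ψ^{(k)} = γ_1^{(k)} ∘ ⋯ ∘ γ_{n-1}^{(k)} ∘ γ_n^{(k)}` on words of length `n`. -/
noncomputable def psiW (k n : ℕ) (w : ℕ → ℕ) : ℕ → ℕ := psiAux k n w n

/-- `ψ^{(k)}` as an operation on list words. -/
noncomputable def psiL (k : ℕ) (l : List ℕ) : List ℕ :=
  List.ofFn (fun i : Fin l.length => psiW k l.length (wf l) (i.1 + 1))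


section Core
variable {k : ℕ}

lemma splits_comm {x a b : ℕ} : Splits x a b ↔ Splits x b a := or_comm

lemma mul_ne_mul_succ (hk : 2 ≤ k) {a b : ℕ} : a * k ≠ b * k + 1 := by
  intro h
  have hab : b < a := by nlinarith
  have h2 : (a - b) * k = 1 := by rw [Nat.sub_mul]; omega
  have : k ∣ 1 := ⟨a - b, by rw [Nat.mul_comm] at h2; omega⟩
  have := Nat.le_of_dvd one_pos this
  omega

lemma memGamma_arith {w : ℕ → ℕ} {j m : ℕ} (h : MemGamma k w j m) :
    1 ≤ m ∧ ∃ c, 1 ≤ c ∧ m + c * k = j := by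
  obtain ⟨hm, t, ht, -⟩ := h
  exact ⟨hm, t + 1, by omega, ht⟩

lemma not_memGamma_succ (hk : 2 ≤ k) {w : ℕ → ℕ} {j q c : ℕ} (hq : q + c * k = j) :
    ¬ MemGamma k w j (q + 1) := by
  intro h
  obtain ⟨-, c', hc', h'⟩ := memGamma_arith h
  exact mul_ne_mul_succ hk (a := c) (b := c') (by omega)

lemma not_memGamma_pred (hk : 2 ≤ k) {w : ℕ → ℕ} {j q c : ℕ} (hq1 : 1 ≤ q)
    (hq : q + c * k = j) : ¬ MemGamma k w j (q - 1) := by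
  intro h
  obtain ⟨-, c', hc', h'⟩ := memGamma_arith h
  exact mul_ne_mul_succ hk (a := c') (b := c) (by omega)

lemma gamW_pair_mem (hk : 2 ≤ k) {w : ℕ → ℕ} {j q c : ℕ} (hq1 : 1 ≤ q)
    (hq : q + c * k = j) (h : MemGamma k w j q) :
    gamW k j w q = w (q + 1) ∧ gamW k j w (q + 1) = w q := by
  constructor
  · simp only [gamW, if_pos h]
  · simp only [gamW, if_neg (not_memGamma_succ hk hq), Nat.add_sub_cancel, if_pos h]

lemma gamW_pair_not_mem (hk : 2 ≤ k) {w : ℕ → ℕ} {j q c : ℕ} (hq1 : 1 ≤ q)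
    (hq : q + c * k = j) (h : ¬ MemGamma k w j q) :
    gamW k j w q = w q ∧ gamW k j w (q + 1) = w (q + 1) := by
  constructor
  · simp only [gamW, if_neg h, if_neg (not_memGamma_pred hk hq1 hq)]
  · simp only [gamW, if_neg (not_memGamma_succ hk hq), Nat.add_sub_cancel, if_neg h]

end Core

section Key
variable {k : ℕ}

lemma xor_splits_congr {x y x' y' a b a' b' : ℕ}
    (hxy : (x' = x ∧ y' = y) ∨ (x' = y ∧ y' = x))
    (hab : (a' = a ∧ b' = b) ∨ (a' = b ∧ b' = a)) :
    Xor' (Splits x' a' b') (Splits y' a' b') ↔ Xor' (Splits x a b) (Splits y a b) := by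
  have hs : ∀ u : ℕ, Splits u a' b' ↔ Splits u a b := by
    intro u; rcases hab with ⟨h1, h2⟩ | ⟨h1, h2⟩ <;> subst h1 <;> subst h2
    · rfl
    · exact splits_comm
  rcases hxy with ⟨h1, h2⟩ | ⟨h1, h2⟩ <;> subst h1 <;> subst h2
  · rw [hs, hs]
  · rw [hs, hs]; exact (xor_comm _ _).to_iff

lemma memGamma_gamW (hk : 2 ≤ k) (w : ℕ → ℕ) (j m : ℕ) :
    MemGamma k (gamW k j w) j m ↔ MemGamma k w j m := by
  unfold MemGamma
  refine and_congr_right fun hm => exists_congr fun t => and_congr_right fun ht => ?_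
  rw [add_mul, one_mul] at ht
  -- pair at a position q with q + c*k = j, q ≥ 1
  have pair : ∀ q c : ℕ, 1 ≤ q → q + c * k = j →
      (gamW k j w q = w q ∧ gamW k j w (q + 1) = w (q + 1)) ∨
      (gamW k j w q = w (q + 1) ∧ gamW k j w (q + 1) = w q) := by
    intro q c hq1 hq
    by_cases h : MemGamma k w j q
    · exact Or.inr (gamW_pair_mem hk hq1 hq h)
    · exact Or.inl (gamW_pair_not_mem hk hq1 hq h)
  have hwj : gamW k j w j = w j := by
    refine (gamW_pair_not_mem hk (q := j) (c := 0) (by omega) (by omega) ?_).1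
    intro h
    obtain ⟨-, c', hc', h'⟩ := memGamma_arith h
    nlinarith
  have hjk : j - k = m + t * k := by omega
  refine and_congr ?_ (forall_congr' fun s => imp_congr_right fun hs1 =>
    imp_congr_right fun hst => ?_)
  · rw [hwj, hjk]
    rcases pair (m + t * k) 1 (by omega) (by omega) with ⟨h1, h2⟩ | ⟨h1, h2⟩
    · rw [h1, h2]
    · rw [h1, h2]; exact splits_comm
  · have e1 : m + s * k + (t + 1 - s) * k = j := by
      have : s * k + (t + 1 - s) * k = (t + 1) * k := by
        rw [← add_mul]; congr 1; omega
      rw [add_mul, one_mul] at this; omega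
    have e2 : m + (s - 1) * k + (t + 1 - (s - 1)) * k = j := by
      have : (s - 1) * k + (t + 1 - (s - 1)) * k = (t + 1) * k := by
        rw [← add_mul]; congr 1; omega
      rw [add_mul, one_mul] at this; omega
    exact xor_splits_congr (pair _ _ (by omega) e1) (pair _ _ (by omega) e2)

lemma gamW_gamW (hk : 2 ≤ k) (w : ℕ → ℕ) (j : ℕ) : gamW k j (gamW k j w) = w := by
  funext p
  conv_lhs => rw [gamW]
  rw [memGamma_gamW hk, memGamma_gamW hk]
  by_cases h1 : MemGamma k w j p
  · rw [if_pos h1]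
    obtain ⟨hp1, c, hc, hcq⟩ := memGamma_arith h1
    exact (gamW_pair_mem hk hp1 hcq h1).2
  · rw [if_neg h1]
    by_cases h2 : MemGamma k w j (p - 1)
    · rw [if_pos h2]
      obtain ⟨hp1, c, hc, hcq⟩ := memGamma_arith h2
      have := (gamW_pair_mem hk hp1 hcq h2).1
      rw [this]
      congr 1
      omega
    · rw [if_neg h2, gamW, if_neg h1, if_neg h2]

end Key

section Inverse
variable {k : ℕ}

lemma psiAux_phiAux (hk : 2 ≤ k) (w : ℕ → ℕ) (n : ℕ) :
    ∀ d, d ≤ n → psiAux k n (phiAux k w n) d = phiAux k w (n - d) := by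
  intro d
  induction d with
  | zero => intro _; simp [psiAux]
  | succ d ih =>
    intro hd
    have hnd : n - d = (n - (d + 1)) + 1 := by omega
    rw [psiAux, ih (by omega), hnd, phiAux, ← hnd, gamW_gamW hk]

lemma psiW_phiW (hk : 2 ≤ k) (w : ℕ → ℕ) (n : ℕ) : psiW k n (phiW k n w) = w := by
  have := psiAux_phiAux hk w n n le_rfl
  simpa [psiW, phiW, phiAux] using this

lemma phiAux_psiAux (hk : 2 ≤ k) (w : ℕ → ℕ) (n : ℕ) :
    ∀ j, j ≤ n → phiAux k (psiW k n w) j = psiAux k n w (n - j) := by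
  intro j
  induction j with
  | zero => intro _; simp [phiAux, psiW]
  | succ j ih =>
    intro hj
    have h1 : n - j = (n - (j + 1)) + 1 := by omega
    have h2 : n - (n - (j + 1)) = j + 1 := by omega
    rw [phiAux, ih (by omega), h1, psiAux, h2, gamW_gamW hk]

lemma phiW_psiW (hk : 2 ≤ k) (w : ℕ → ℕ) (n : ℕ) : phiW k n (psiW k n w) = w := by
  have := phiAux_psiAux hk w n n le_rfl
  simpa [psiW, phiW, psiAux] using this

end Inverse

section Congr
variable {k : ℕ}

lemma splits_congr' {x a b x' a' b' : ℕ} (hx : x = x') (ha : a = a') (hb : b = b') :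
    Splits x a b ↔ Splits x' a' b' := by rw [hx, ha, hb]

lemma memGamma_congr {v u : ℕ → ℕ} (h : ∀ q, 1 ≤ q → v q = u q) (j m : ℕ) :
    MemGamma k v j m ↔ MemGamma k u j m := by
  unfold MemGamma
  refine and_congr_right fun hm => exists_congr fun t => and_congr_right fun ht => ?_
  rw [add_mul, one_mul] at ht
  refine and_congr (splits_congr' (h _ (by omega)) (h _ (by omega)) (h _ (by omega)))
    (forall_congr' fun s => imp_congr_right fun hs1 => imp_congr_right fun hst => ?_)
  rw [splits_congr' (h _ (by omega)) (h _ (by omega)) (h _ (by omega)),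
    splits_congr' (h (m + s * k + 1) (by omega)) (h _ (by omega)) (h _ (by omega))]

lemma gamW_congr {v u : ℕ → ℕ} (h : ∀ q, 1 ≤ q → v q = u q) (j : ℕ) :
    ∀ p, 1 ≤ p → gamW k j v p = gamW k j u p := by
  intro p hp
  unfold gamW
  rw [memGamma_congr h, memGamma_congr h]
  by_cases h1 : MemGamma k u j p
  · rw [if_pos h1, if_pos h1]; exact h _ (by omega)
  · rw [if_neg h1, if_neg h1]
    by_cases h2 : MemGamma k u j (p - 1)
    · rw [if_pos h2, if_pos h2]; exact h _ (memGamma_arith h2).1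
    · rw [if_neg h2, if_neg h2]; exact h _ hp

lemma psiAux_congr {v u : ℕ → ℕ} (h : ∀ q, 1 ≤ q → v q = u q) (n : ℕ) :
    ∀ d p, 1 ≤ p → psiAux k n v d p = psiAux k n u d p := by
  intro d
  induction d with
  | zero => exact h
  | succ d ih => exact fun p hp => gamW_congr ih _ p hp

lemma psiW_congr {v u : ℕ → ℕ} (h : ∀ q, 1 ≤ q → v q = u q) (n : ℕ) :
    ∀ p, 1 ≤ p → psiW k n v p = psiW k n u p := psiAux_congr h n n

lemma phiAux_congr {v u : ℕ → ℕ} (h : ∀ q, 1 ≤ q → v q = u q) :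
    ∀ d p, 1 ≤ p → phiAux k v d p = phiAux k u d p := by
  intro d
  induction d with
  | zero => exact h
  | succ d ih => exact fun p hp => gamW_congr ih _ p hp

lemma phiW_congr {v u : ℕ → ℕ} (h : ∀ q, 1 ≤ q → v q = u q) (n : ℕ) :
    ∀ p, 1 ≤ p → phiW k n v p = phiW k n u p := phiAux_congr h n

end Congr

section Perm
variable {k : ℕ}

/-- The involution of positions realizing `gamW`. -/
noncomputable def sigW (k j : ℕ) (w : ℕ → ℕ) : ℕ → ℕ := fun p =>
  if MemGamma k w j p then p + 1 else if MemGamma k w j (p - 1) then p - 1 else p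

lemma gamW_eq_comp (k j : ℕ) (w : ℕ → ℕ) : gamW k j w = w ∘ sigW k j w := by
  funext p
  simp only [gamW, sigW, Function.comp]
  split_ifs <;> rfl

lemma sigW_invol (hk : 2 ≤ k) (j : ℕ) (w : ℕ → ℕ) :
    ∀ p, sigW k j w (sigW k j w p) = p := by
  intro p
  unfold sigW
  by_cases h1 : MemGamma k w j p
  · obtain ⟨hp1, c, hc, hcq⟩ := memGamma_arith h1
    rw [if_pos h1, if_neg (not_memGamma_succ hk hcq), Nat.add_sub_cancel, if_pos h1]
  · rw [if_neg h1]
    by_cases h2 : MemGamma k w j (p - 1)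
    · obtain ⟨hp1, c, hc, hcq⟩ := memGamma_arith h2
      rw [if_pos h2, if_pos h2]
      omega
    · rw [if_neg h2, if_neg h1, if_neg h2]

/-- A "good" position permutation for length `n`. -/
def Good (n : ℕ) (π : ℕ → ℕ) : Prop :=
  Function.Injective π ∧ (∀ p, n < p → π p = p) ∧
    (∀ p, 1 ≤ p → p ≤ n → 1 ≤ π p ∧ π p ≤ n)

lemma good_id (n : ℕ) : Good n id :=
  ⟨fun _ _ h => h, fun _ _ => rfl, fun p h1 h2 => ⟨h1, h2⟩⟩

lemma good_sigW (hk : 2 ≤ k) {j n : ℕ} (hj : j ≤ n) (w : ℕ → ℕ) : Good n (sigW k j w) := by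
  refine ⟨Function.LeftInverse.injective (g := sigW k j w) (sigW_invol hk j w), ?_, ?_⟩
  · intro p hp
    unfold sigW
    rw [if_neg, if_neg]
    · intro h; obtain ⟨h1, c, hc, hcq⟩ := memGamma_arith h
      have hck : 2 ≤ c * k := by nlinarith
      omega
    · intro h; obtain ⟨h1, c, hc, hcq⟩ := memGamma_arith h
      have hck : 2 ≤ c * k := by nlinarith
      omega
  · intro p hp1 hpn
    unfold sigW
    by_cases h1 : MemGamma k w j p
    · obtain ⟨h1', c, hc, hcq⟩ := memGamma_arith h1
      rw [if_pos h1]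
      have hck : 2 ≤ c * k := by nlinarith
      omega
    · rw [if_neg h1]
      by_cases h2 : MemGamma k w j (p - 1)
      · rw [if_pos h2]
        exact ⟨(memGamma_arith h2).1, by omega⟩
      · rw [if_neg h2]; exact ⟨hp1, hpn⟩

lemma good_comp {n : ℕ} {π σ : ℕ → ℕ} (hπ : Good n π) (hσ : Good n σ) :
    Good n (π ∘ σ) := by
  refine ⟨hπ.1.comp hσ.1, fun p hp => ?_, fun p h1 h2 => ?_⟩
  · simp only [Function.comp]; rw [hσ.2.1 p hp, hπ.2.1 p hp]
  · obtain ⟨hs1, hs2⟩ := hσ.2.2 p h1 h2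
    exact hπ.2.2 _ hs1 hs2

lemma phiAux_good (hk : 2 ≤ k) (w : ℕ → ℕ) {n : ℕ} :
    ∀ j, j ≤ n → ∃ π, Good n π ∧ phiAux k w j = w ∘ π := by
  intro j
  induction j with
  | zero => exact fun _ => ⟨id, good_id n, rfl⟩
  | succ j ih =>
    intro hj
    obtain ⟨π, hπ, heq⟩ := ih (by omega)
    refine ⟨π ∘ sigW k (j + 1) (phiAux k w j), good_comp hπ (good_sigW hk hj _), ?_⟩
    rw [phiAux, gamW_eq_comp, heq]
    rfl

lemma phiW_good (hk : 2 ≤ k) (w : ℕ → ℕ) (n : ℕ) :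
    ∃ π, Good n π ∧ phiW k n w = w ∘ π := phiAux_good hk w n le_rfl

lemma psiAux_good (hk : 2 ≤ k) (w : ℕ → ℕ) (n : ℕ) :
    ∀ d, d ≤ n → ∃ π, Good n π ∧ psiAux k n w d = w ∘ π := by
  intro d
  induction d with
  | zero => exact fun _ => ⟨id, good_id n, rfl⟩
  | succ d ih =>
    intro hd
    obtain ⟨π, hπ, heq⟩ := ih (by omega)
    refine ⟨π ∘ sigW k (n - d) (psiAux k n w d),
      good_comp hπ (good_sigW hk (by omega) _), ?_⟩
    rw [psiAux, gamW_eq_comp, heq]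
    rfl

lemma psiW_good (hk : 2 ≤ k) (w : ℕ → ℕ) (n : ℕ) :
    ∃ π, Good n π ∧ psiW k n w = w ∘ π := psiAux_good hk w n n le_rfl

end Perm

section MultisetLemma

lemma multiset_ofFn_good (l : List ℕ) (π : ℕ → ℕ) (hg : Good l.length π) :
    (↑(List.ofFn (fun i : Fin l.length => wf l (π (i.1 + 1)))) : Multiset ℕ) = ↑l := by
  set n := l.length with hn
  have hbound : ∀ i : Fin n, 1 ≤ π (i.1 + 1) ∧ π (i.1 + 1) ≤ n := fun i =>
    hg.2.2 (i.1 + 1) (by omega) (by omega)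
  set f : Fin n → Fin n := fun i => ⟨π (i.1 + 1) - 1, by have := hbound i; omega⟩ with hf
  have hinjf : Function.Injective f := by
    intro i i' h
    have h1 := hbound i
    have h2 := hbound i'
    have : π (i.1 + 1) = π (i'.1 + 1) := by
      have := congrArg Fin.val h
      simp only [hf] at this
      omega
    have := hg.1 this
    exact Fin.ext (by omega)
  set g : Fin n → ℕ := fun i => wf l (i.1 + 1) with hgdef
  have hfun : (fun i : Fin n => wf l (π (i.1 + 1))) = g ∘ f := by
    funext i
    simp only [hgdef, hf, Function.comp]
    congr 1
    have := hbound i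
    omega
  have hlg : l = List.ofFn g := by
    have : ∀ i : Fin n, g i = l[i.1] := by
      intro i
      simp only [hgdef, wf, Nat.add_sub_cancel]
      exact List.getD_eq_getElem l 0 i.2
    rw [funext this]
    exact List.ofFn_getElem.symm
  have huniv : (Finset.univ : Finset (Fin n)).val = (↑(List.finRange n) : Multiset (Fin n)) :=
    congrArg Finset.val (Fin.univ_def n)
  have hmapf : Multiset.map f (↑(List.finRange n) : Multiset (Fin n)) = ↑(List.finRange n) := by
    have hb := Finite.injective_iff_bijective.mp hinjf
    have h2 := congrArg Finset.val (Finset.map_univ_equiv (Equiv.ofBijective f hb))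
    rw [Finset.map_val, huniv] at h2
    exact h2
  rw [hfun, List.ofFn_eq_map, ← Multiset.map_coe]
  conv_rhs => rw [hlg, List.ofFn_eq_map, ← Multiset.map_coe, ← hmapf, Multiset.map_map]

end MultisetLemma

section Final
variable {k : ℕ}

lemma wf_out {l : List ℕ} {q : ℕ} (h : l.length < q) : wf l q = 0 :=
  List.getD_eq_default l 0 (by omega)

lemma phiW_out (hk : 2 ≤ k) (w : ℕ → ℕ) (n : ℕ) {q : ℕ} (h : n < q) :
    phiW k n w q = w q := by
  obtain ⟨π, hπ, heq⟩ := phiW_good hk w n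
  rw [heq]
  simp only [Function.comp]
  rw [hπ.2.1 q h]

lemma psiW_out (hk : 2 ≤ k) (w : ℕ → ℕ) (n : ℕ) {q : ℕ} (h : n < q) :
    psiW k n w q = w q := by
  obtain ⟨π, hπ, heq⟩ := psiW_good hk w n
  rw [heq]
  simp only [Function.comp]
  rw [hπ.2.1 q h]

lemma wf_phiL (hk : 2 ≤ k) (l : List ℕ) :
    ∀ q, 1 ≤ q → wf (phiL k l) q = phiW k l.length (wf l) q := by
  intro q hq
  by_cases hqn : q ≤ l.length
  · have hlt : q - 1 < (phiL k l).length := by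
      unfold phiL; rw [List.length_ofFn]; omega
    have : wf (phiL k l) q = (phiL k l)[q - 1] := List.getD_eq_getElem _ 0 hlt
    rw [this]; simp only [phiL]; rw [List.getElem_ofFn]
    congr 1
    simp only [Fin.val_mk]
    omega
  · rw [wf_out (by unfold phiL; rw [List.length_ofFn]; omega), phiW_out hk _ _ (by omega),
      wf_out (by omega)]

lemma wf_psiL (hk : 2 ≤ k) (l : List ℕ) :
    ∀ q, 1 ≤ q → wf (psiL k l) q = psiW k l.length (wf l) q := by
  intro q hq
  by_cases hqn : q ≤ l.length
  · have hlt : q - 1 < (psiL k l).length := by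
      unfold psiL; rw [List.length_ofFn]; omega
    have : wf (psiL k l) q = (psiL k l)[q - 1] := List.getD_eq_getElem _ 0 hlt
    rw [this]; simp only [psiL]; rw [List.getElem_ofFn]
    congr 1
    simp only [Fin.val_mk]
    omega
  · rw [wf_out (by unfold psiL; rw [List.length_ofFn]; omega), psiW_out hk _ _ (by omega),
      wf_out (by omega)]

lemma wf_getElem (l : List ℕ) {i : ℕ} (h : i < l.length) : wf l (i + 1) = l[i] := by
  simpa [wf] using List.getD_eq_getElem l 0 h

lemma phiL_multiset (hk : 2 ≤ k) (l : List ℕ) :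
    (↑(phiL k l) : Multiset ℕ) = (↑l : Multiset ℕ) := by
  obtain ⟨π, hπ, heq⟩ := phiW_good hk (wf l) l.length
  have : phiL k l = List.ofFn (fun i : Fin l.length => wf l (π (i.1 + 1))) := by
    unfold phiL
    congr 1
    funext i
    rw [heq]
    rfl
  rw [this]
  exact multiset_ofFn_good l π hπ

lemma psiL_multiset (hk : 2 ≤ k) (l : List ℕ) :
    (↑(psiL k l) : Multiset ℕ) = (↑l : Multiset ℕ) := by
  obtain ⟨π, hπ, heq⟩ := psiW_good hk (wf l) l.length
  have : psiL k l = List.ofFn (fun i : Fin l.length => wf l (π (i.1 + 1))) := by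
    unfold psiL
    congr 1
    funext i
    rw [heq]
    rfl
  rw [this]
  exact multiset_ofFn_good l π hπ

lemma psiL_phiL (hk : 2 ≤ k) (l : List ℕ) : psiL k (phiL k l) = l := by
  set n := l.length with hn
  have hL : (phiL k l).length = n := by unfold phiL; rw [List.length_ofFn]
  refine List.ext_getElem (by unfold psiL; rw [List.length_ofFn, hL]) ?_
  intro i h1 h2
  simp only [psiL]; rw [List.getElem_ofFn]
  simp only [hL, Fin.val_mk]
  calc psiW k n (wf (phiL k l)) (i + 1)
      = psiW k n (phiW k n (wf l)) (i + 1) :=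
        psiW_congr (wf_phiL hk l) n (i + 1) (by omega)
    _ = wf l (i + 1) := by rw [psiW_phiW hk]
    _ = l[i] := wf_getElem l h2

lemma phiL_psiL (hk : 2 ≤ k) (l : List ℕ) : phiL k (psiL k l) = l := by
  set n := l.length with hn
  have hL : (psiL k l).length = n := by unfold psiL; rw [List.length_ofFn]
  refine List.ext_getElem (by unfold phiL; rw [List.length_ofFn, hL]) ?_
  intro i h1 h2
  simp only [phiL]; rw [List.getElem_ofFn]
  simp only [hL, Fin.val_mk]
  calc phiW k n (wf (psiL k l)) (i + 1)
      = phiW k n (psiW k n (wf l)) (i + 1) :=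
        phiW_congr (wf_psiL hk l) n (i + 1) (by omega)
    _ = wf l (i + 1) := by rw [phiW_psiW hk]
    _ = l[i] := wf_getElem l h2

end Final

/-- For every `k ≥ 2`, the map `φ^{(k)}` is a bijection from the set
of words rearranging a fixed finite multiset `M` of positive integers to itself, with
inverse `ψ^{(k)} = γ_1^{(k)} ∘ ⋯ ∘ γ_{n-1}^{(k)} ∘ γ_n^{(k)}`. -/
theorem phi_bijection (k : ℕ) (hk : 2 ≤ k) (M : Multiset ℕ) (hM : ∀ x ∈ M, 0 < x) :
    (∀ l : List ℕ, (↑l : Multiset ℕ) = M → (↑(phiL k l) : Multiset ℕ) = M) ∧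
    (∀ l : List ℕ, (↑l : Multiset ℕ) = M → (↑(psiL k l) : Multiset ℕ) = M) ∧
    (∀ l : List ℕ, (↑l : Multiset ℕ) = M → psiL k (phiL k l) = l) ∧
    (∀ l : List ℕ, (↑l : Multiset ℕ) = M → phiL k (psiL k l) = l) := by
  refine ⟨fun l hl => ?_, fun l hl => ?_, fun l _ => psiL_phiL hk l, fun l _ => phiL_psiL hk l⟩
  · rw [phiL_multiset hk, hl]
  · rw [psiL_multiset hk, hl]
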